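/- Let ε > 0 and let (a_n) be an increasing sequence of real numbers, eventually ≥ n^{1+ε}, such that a_n > 2^n for all n in each of infinitely many disjoint integer intervals [t, k]. Then for all sufficiently large such t, ∑_{n=t}^{k} a_n^{−1 + 1/(log log a_n)^{3+ε}} < a_t^{−1 + 1/(log log a_t)^{3+ε/2}}. -/

import Mathlib

open Filter Real

private lemma geom_sum_le_one_div' {r : ℝ} (h0 : 0 ≤ r) (h1 : r < 1) (n : ℕ) :
    ∑ i ∈ Finset.range n, r ^ i ≤ 1 / (1 - r) := by
  rw [le_div_iff₀ (by linarith)]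
  have h := geom_sum_mul r n
  nlinarith [pow_nonneg h0 n]

set_option maxHeartbeats 1000000 in
private lemma stmt17_key (ε : ℝ) (hε : 0 < ε) (a : ℕ → ℝ) (hmono : Monotone a)
    (T K : ℕ) (hTK : T ≤ K) (hbig : ∀ n ∈ Finset.Icc T K, (2 : ℝ) ^ n < a n)
    (hL1 : 1 ≤ Real.log (Real.log (a T)))
    (hL2 : 2 ≤ Real.log (Real.log (a T)) ^ (ε / 2))
    (hL4 : 4 * (Real.log 8 + Real.log 2) + 4 * (3 + ε / 2) + 1
        ≤ Real.exp (Real.log (Real.log (a T)))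
            / Real.log (Real.log (a T)) ^ (3 + ε / 2 + 1)) :
    (∑ n ∈ Finset.Icc T K,
        a n ^ (-1 + 1 / Real.log (Real.log (a n)) ^ (3 + ε)))
      < a T ^ (-1 + 1 / Real.log (Real.log (a T)) ^ (3 + ε / 2)) := by
  have hTmem : T ∈ Finset.Icc T K := Finset.mem_Icc.mpr ⟨le_rfl, hTK⟩
  have h2T : (2 : ℝ) ^ T < a T := hbig T hTmem
  have haT1 : (1 : ℝ) < a T := lt_of_le_of_lt (one_le_pow₀ one_le_two) h2T
  have haT0 : (0 : ℝ) < a T := lt_trans one_pos haT1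
  have hlogaT : (0 : ℝ) < Real.log (a T) := Real.log_pos haT1
  set L : ℝ := Real.log (Real.log (a T)) with hLdef
  have hexpL : Real.exp L = Real.log (a T) := Real.exp_log hlogaT
  set δ' : ℝ := 1 / L ^ (3 + ε / 2) with hδ'def
  set γ : ℝ := 1 / L ^ (3 + ε / 2) - 1 / L ^ (3 + ε) with hγdef
  set A : ℝ := a T ^ (-1 + δ') with hAdef
  set B : ℝ := a T ^ (-(γ / 2)) with hBdef
  set r : ℝ := (2 : ℝ) ^ (-(γ / 2)) with hrdef
  have hApos : 0 < A := Real.rpow_pos_of_pos haT0 _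
  have hBpos : 0 < B := Real.rpow_pos_of_pos haT0 _
  have hr0 : 0 < r := Real.rpow_pos_of_pos two_pos _
  clear_value L δ' γ A B r
  have hL0 : (0 : ℝ) < L := lt_of_lt_of_le one_pos hL1
  have hL1' : (1 : ℝ) < L := by
    by_contra h
    push_neg at h
    have : L ^ (ε / 2) ≤ 1 := Real.rpow_le_one hL0.le h (by positivity)
    linarith
  have hLs0 : (0 : ℝ) < L ^ (3 + ε / 2) := Real.rpow_pos_of_pos hL0 _
  have hLf0 : (0 : ℝ) < L ^ (3 + ε) := Real.rpow_pos_of_pos hL0 _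
  have hLsne : L ^ (3 + ε / 2) ≠ 0 := ne_of_gt hLs0
  have hLs1 : (1 : ℝ) ≤ L ^ (3 + ε / 2) := by
    have h := Real.rpow_le_rpow_of_exponent_le hL1 (show (0 : ℝ) ≤ 3 + ε / 2 by linarith)
    rwa [Real.rpow_zero] at h
  have hratio : L ^ (3 + ε) = L ^ (3 + ε / 2) * L ^ (ε / 2) := by
    rw [show (3 : ℝ) + ε = 3 + ε / 2 + ε / 2 by ring]
    exact Real.rpow_add hL0 _ _
  have hγ_lb : 1 / (2 * L ^ (3 + ε / 2)) ≤ γ := by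
    have h1 : 1 / L ^ (3 + ε) ≤ 1 / (L ^ (3 + ε / 2) * 2) := by
      apply one_div_le_one_div_of_le (by positivity)
      rw [hratio]
      exact mul_le_mul_of_nonneg_left hL2 hLs0.le
    have e1 : 1 / L ^ (3 + ε / 2) - 1 / (L ^ (3 + ε / 2) * 2)
        = 1 / (2 * L ^ (3 + ε / 2)) := by
      field_simp
      ring
    rw [hγdef]
    linarith
  have h2Ls : (0 : ℝ) < 2 * L ^ (3 + ε / 2) := by linarith
  have hγ_pos : (0 : ℝ) < γ := lt_of_lt_of_le (one_div_pos.mpr h2Ls) hγ_lb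
  have hδ'_pos : (0 : ℝ) < δ' := by rw [hδ'def]; exact one_div_pos.mpr hLs0
  have hδ'_le1 : δ' ≤ 1 := by
    rw [hδ'def, div_le_one hLs0]
    exact hLs1
  have hγ_le1 : γ ≤ 1 := by
    have h0 : (0 : ℝ) < 1 / L ^ (3 + ε) := one_div_pos.mpr hLf0
    have h1 : 1 / L ^ (3 + ε / 2) ≤ 1 := by rw [div_le_one hLs0]; exact hLs1
    rw [hγdef]
    linarith
  have hr1 : r < 1 := by
    rw [hrdef]
    exact Real.rpow_lt_one_of_one_lt_of_neg one_lt_two (by linarith)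
  -- per-term bound
  have hterm : ∀ n ∈ Finset.Icc T K,
      a n ^ (-1 + 1 / Real.log (Real.log (a n)) ^ (3 + ε)) ≤ A * B * r ^ n := by
    intro n hn
    have hn2 : (2 : ℝ) ^ n < a n := hbig n hn
    have h1an : (1 : ℝ) < a n := lt_of_le_of_lt (one_le_pow₀ one_le_two) hn2
    have h0an : (0 : ℝ) < a n := lt_trans one_pos h1an
    have haTan : a T ≤ a n := hmono (Finset.mem_Icc.mp hn).1
    have hlogan : Real.log (a T) ≤ Real.log (a n) := Real.log_le_log haT0 haTan
    have hLn : L ≤ Real.log (Real.log (a n)) := by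
      rw [hLdef]
      exact Real.log_le_log hlogaT hlogan
    set δn : ℝ := 1 / Real.log (Real.log (a n)) ^ (3 + ε) with hδndef
    have hδn : δn ≤ 1 / L ^ (3 + ε) := by
      rw [hδndef]
      apply one_div_le_one_div_of_le hLf0
      exact Real.rpow_le_rpow hL0.le hLn (by linarith)
    clear_value δn
    have hsplit : a n ^ (-1 + δn) = a n ^ (-1 + δ') * a n ^ (δn - δ') := by
      rw [← Real.rpow_add h0an]
      congr 1
      ring
    have stepA : a n ^ (-1 + δ') ≤ A := by
      rw [hAdef]
      exact Real.rpow_le_rpow_of_nonpos haT0 haTan (by linarith)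
    have stepB : a n ^ (δn - δ') ≤ a n ^ (-γ) := by
      apply Real.rpow_le_rpow_of_exponent_le h1an.le
      have hd : δ' - γ = 1 / L ^ (3 + ε) := by rw [hγdef, hδ'def]; ring
      linarith
    have stepC : a n ^ (-γ) ≤ B * r ^ n := by
      have e : -γ = -(γ / 2) + -(γ / 2) := by ring
      rw [e, Real.rpow_add h0an]
      have d1 : a n ^ (-(γ / 2)) ≤ B := by
        rw [hBdef]
        exact Real.rpow_le_rpow_of_nonpos haT0 haTan (by linarith)
      have d2 : a n ^ (-(γ / 2)) ≤ r ^ n := by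
        have h := Real.rpow_le_rpow_of_nonpos (pow_pos two_pos n) hn2.le
          (show -(γ / 2) ≤ 0 by linarith)
        refine h.trans_eq ?_
        rw [hrdef, ← Real.rpow_natCast 2 n, ← Real.rpow_mul (by norm_num : (0:ℝ) ≤ 2),
          mul_comm ((n : ℝ)) (-(γ / 2)),
          Real.rpow_mul (by norm_num : (0:ℝ) ≤ 2), Real.rpow_natCast]
      exact mul_le_mul d1 d2 (Real.rpow_nonneg h0an.le _) hBpos.le
    calc a n ^ (-1 + δn) = a n ^ (-1 + δ') * a n ^ (δn - δ') := hsplit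
      _ ≤ A * a n ^ (δn - δ') :=
          mul_le_mul_of_nonneg_right stepA (Real.rpow_nonneg h0an.le _)
      _ ≤ A * a n ^ (-γ) := mul_le_mul_of_nonneg_left stepB hApos.le
      _ ≤ A * (B * r ^ n) := mul_le_mul_of_nonneg_left stepC hApos.le
      _ = A * B * r ^ n := by ring
  -- geometric sum bound
  have hsum : ∑ n ∈ Finset.Icc T K, r ^ n ≤ 1 / (1 - r) := by
    have hsub : Finset.Icc T K ⊆ Finset.range (K + 1) := by
      intro x hx
      rw [Finset.mem_range]
      exact Nat.lt_succ_of_le (Finset.mem_Icc.mp hx).2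
    have h1 : ∑ n ∈ Finset.Icc T K, r ^ n ≤ ∑ n ∈ Finset.range (K + 1), r ^ n :=
      Finset.sum_le_sum_of_subset_of_nonneg hsub (fun i _ _ => pow_nonneg hr0.le i)
    exact h1.trans (geom_sum_le_one_div' hr0.le hr1 (K + 1))
  -- the final numeric inequality: B < γ / 8
  have hlog8 : (0 : ℝ) < Real.log 8 := Real.log_pos (by norm_num)
  have hlog2 : (0 : ℝ) < Real.log 2 := Real.log_pos one_lt_two
  have hfin : B < γ / 8 := by
    have hX : (0 : ℝ) < L ^ (3 + ε / 2 + 1) := Real.rpow_pos_of_pos hL0 _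
    have hexp_lb : (4 * (Real.log 8 + Real.log 2) + 4 * (3 + ε / 2) + 1)
        * (L ^ (3 + ε / 2) * L) ≤ Real.exp L := by
      have h := (le_div_iff₀ hX).mp hL4
      have e : L ^ (3 + ε / 2 + 1) = L ^ (3 + ε / 2) * L := by
        rw [Real.rpow_add hL0, Real.rpow_one]
      rwa [e] at h
    have hlogL : Real.log L ≤ L := (Real.log_le_sub_one_of_pos hL0).trans (by linarith)
    have hlogγ : -(Real.log 2 + (3 + ε / 2) * Real.log L) ≤ Real.log γ := by
      have h := Real.log_le_log (one_div_pos.mpr h2Ls) hγ_lb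
      have e : Real.log (1 / (2 * L ^ (3 + ε / 2)))
          = -(Real.log 2 + (3 + ε / 2) * Real.log L) := by
        rw [one_div, Real.log_inv, Real.log_mul (by norm_num) hLsne,
          Real.log_rpow hL0]
      rwa [e] at h
    have key1 : (4 * (Real.log 8 + Real.log 2) + 4 * (3 + ε / 2) + 1) * L / 4
        ≤ γ / 2 * Real.exp L := by
      have hpos4 : (0 : ℝ) < 4 * L ^ (3 + ε / 2) := by linarith
      have h1 : 1 / (4 * L ^ (3 + ε / 2)) ≤ γ / 2 := by
        have e : 1 / (4 * L ^ (3 + ε / 2)) = 1 / (2 * L ^ (3 + ε / 2)) / 2 := by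
          field_simp
          ring
        rw [e]
        linarith
      have h3 : 1 / (4 * L ^ (3 + ε / 2)) * Real.exp L ≤ γ / 2 * Real.exp L :=
        mul_le_mul_of_nonneg_right h1 (Real.exp_pos L).le
      have h4 : 1 / (4 * L ^ (3 + ε / 2))
            * ((4 * (Real.log 8 + Real.log 2) + 4 * (3 + ε / 2) + 1)
              * (L ^ (3 + ε / 2) * L))
          ≤ 1 / (4 * L ^ (3 + ε / 2)) * Real.exp L :=
        mul_le_mul_of_nonneg_left hexp_lb (one_div_nonneg.mpr hpos4.le)
      have e2 : 1 / (4 * L ^ (3 + ε / 2))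
            * ((4 * (Real.log 8 + Real.log 2) + 4 * (3 + ε / 2) + 1)
              * (L ^ (3 + ε / 2) * L))
          = (4 * (Real.log 8 + Real.log 2) + 4 * (3 + ε / 2) + 1) * L / 4 := by
        field_simp
      linarith
    have hmid : Real.log 8 + Real.log 2 + (3 + ε / 2) * L
        < (4 * (Real.log 8 + Real.log 2) + 4 * (3 + ε / 2) + 1) * L / 4 := by
      have hone : (Real.log 8 + Real.log 2) * 1 ≤ (Real.log 8 + Real.log 2) * L :=
        mul_le_mul_of_nonneg_left hL1 (by linarith)
      nlinarith
    have hgoal : Real.log (a T) * (-(γ / 2)) < Real.log (γ / 8) := by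
      have hlogγ8 : Real.log (γ / 8) = Real.log γ - Real.log 8 :=
        Real.log_div (ne_of_gt hγ_pos) (by norm_num)
      have hsl : (3 + ε / 2) * Real.log L ≤ (3 + ε / 2) * L :=
        mul_le_mul_of_nonneg_left hlogL (by linarith)
      rw [hlogγ8, ← hexpL]
      nlinarith
    rw [hBdef, Real.rpow_def_of_pos haT0]
    exact (Real.lt_log_iff_exp_lt (show (0:ℝ) < γ / 8 by linarith)).mp hgoal
  -- 1 - r ≥ γ / 8
  have h1r : γ / 8 ≤ 1 - r := by
    set y : ℝ := Real.log 2 * (γ / 2) with hydef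
    clear_value y
    have hlog2gt : (0.6931471803 : ℝ) < Real.log 2 := Real.log_two_gt_d9
    have hlog2lt : Real.log 2 < 0.6931471808 := Real.log_two_lt_d9
    have hy_pos : 0 < y := by
      rw [hydef]
      exact mul_pos hlog2 (by linarith)
    have hyγ : γ / 4 ≤ y := by
      have h1 : (1 / 2 : ℝ) * (γ / 2) ≤ Real.log 2 * (γ / 2) :=
        mul_le_mul_of_nonneg_right (by linarith) (by linarith)
      rw [hydef]
      linarith
    have hy_le : y ≤ 1 / 2 := by
      have h1 : Real.log 2 * (γ / 2) ≤ 1 * (γ / 2) :=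
        mul_le_mul_of_nonneg_right (by linarith) (by linarith)
      rw [hydef]
      linarith
    have hr_eq : r = Real.exp (-y) := by
      rw [hrdef, Real.rpow_def_of_pos two_pos, hydef]
      congr 1
      ring
    have hexpy : y + 1 ≤ Real.exp y := Real.add_one_le_exp y
    have hrle : r ≤ 1 / (1 + y) := by
      rw [hr_eq, Real.exp_neg, ← one_div]
      apply one_div_le_one_div_of_le (by linarith)
      linarith
    have hfrac : 1 / (1 + y) ≤ 1 - γ / 8 := by
      rw [div_le_iff₀ (by linarith : (0:ℝ) < 1 + y)]
      nlinarith [mul_nonneg (by linarith : (0:ℝ) ≤ 1 - γ) hy_pos.le]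
    linarith
  have h1rpos : 0 < 1 - r := lt_of_lt_of_le (by linarith) h1r
  -- final assembly
  calc (∑ n ∈ Finset.Icc T K, a n ^ (-1 + 1 / Real.log (Real.log (a n)) ^ (3 + ε)))
      ≤ ∑ n ∈ Finset.Icc T K, A * B * r ^ n := Finset.sum_le_sum hterm
    _ = A * B * ∑ n ∈ Finset.Icc T K, r ^ n := by rw [Finset.mul_sum]
    _ ≤ A * B * (1 / (1 - r)) :=
        mul_le_mul_of_nonneg_left hsum (mul_pos hApos hBpos).le
    _ < A := by
        rw [mul_one_div, div_lt_iff₀ h1rpos]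
        exact mul_lt_mul_of_pos_left (lt_of_lt_of_le hfin h1r) hApos

/-- finite-interval tail estimate on infinitely many disjoint intervals
`[t j, k j]` on which `a n > 2 ^ n`. -/
theorem stmt17 (ε : ℝ) (hε : 0 < ε) (a : ℕ → ℝ) (hmono : Monotone a)
    (hev : ∀ᶠ n : ℕ in Filter.atTop, (n : ℝ) ^ (1 + ε) ≤ a n)
    (t k : ℕ → ℕ) (htk : ∀ j, t j ≤ k j) (hdisj : ∀ j, k j < t (j + 1))
    (hbig : ∀ j, ∀ n ∈ Finset.Icc (t j) (k j), (2 : ℝ) ^ n < a n) :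
    ∀ᶠ j : ℕ in Filter.atTop,
      (∑ n ∈ Finset.Icc (t j) (k j),
          a n ^ (-1 + 1 / Real.log (Real.log (a n)) ^ (3 + ε)))
        < a (t j) ^ (-1 + 1 / Real.log (Real.log (a (t j))) ^ (3 + ε / 2)) := by
  have htj : ∀ j : ℕ, j ≤ t j := by
    intro j
    induction j with
    | zero => exact Nat.zero_le _
    | succ n ih =>
      have h1 := hdisj n
      have h2 := htk n
      omega
  have hev1 : ∀ᶠ L : ℝ in Filter.atTop,
      1 ≤ L ∧ 2 ≤ L ^ (ε / 2) ∧
        4 * (Real.log 8 + Real.log 2) + 4 * (3 + ε / 2) + 1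
          ≤ Real.exp L / L ^ (3 + ε / 2 + 1) := by
    filter_upwards [Filter.eventually_ge_atTop (1 : ℝ),
      (tendsto_rpow_atTop (by positivity : (0:ℝ) < ε / 2)).eventually_ge_atTop 2,
      (tendsto_exp_div_rpow_atTop (3 + ε / 2 + 1)).eventually_ge_atTop
        (4 * (Real.log 8 + Real.log 2) + 4 * (3 + ε / 2) + 1)]
      with L h1 h2 h3
    exact ⟨h1, h2, h3⟩
  obtain ⟨L₀, hL₀⟩ := Filter.eventually_atTop.mp hev1
  set J : ℕ := ⌈Real.exp L₀ / Real.log 2⌉₊ + 1 with hJdef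
  filter_upwards [Filter.eventually_ge_atTop J] with j hj
  have hTj : J ≤ t j := le_trans hj (htj j)
  have hlog2 : (0 : ℝ) < Real.log 2 := Real.log_pos one_lt_two
  have h2T : (2 : ℝ) ^ (t j) < a (t j) :=
    hbig j (t j) (Finset.mem_Icc.mpr ⟨le_rfl, htk j⟩)
  have hlogaT : (t j : ℝ) * Real.log 2 ≤ Real.log (a (t j)) := by
    have h := Real.log_le_log (pow_pos two_pos (t j)) h2T.le
    rwa [Real.log_pow] at h
  have hcast : Real.exp L₀ ≤ (t j : ℝ) * Real.log 2 := by
    have h1 : Real.exp L₀ / Real.log 2 ≤ (J : ℝ) := by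
      have h0 := Nat.le_ceil (Real.exp L₀ / Real.log 2)
      have h2 : ((⌈Real.exp L₀ / Real.log 2⌉₊ : ℝ)) ≤ (J : ℝ) := by
        rw [hJdef]
        push_cast
        linarith
      linarith
    have h2 : (J : ℝ) ≤ (t j : ℝ) := Nat.cast_le.mpr hTj
    rw [div_le_iff₀ hlog2] at h1
    calc Real.exp L₀ ≤ (J : ℝ) * Real.log 2 := h1
      _ ≤ (t j : ℝ) * Real.log 2 := mul_le_mul_of_nonneg_right h2 hlog2.le
  have hLT : L₀ ≤ Real.log (Real.log (a (t j))) := by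
    have h0 : (0 : ℝ) < (t j : ℝ) * Real.log 2 :=
      lt_of_lt_of_le (Real.exp_pos _) hcast
    calc L₀ = Real.log (Real.exp L₀) := (Real.log_exp _).symm
      _ ≤ Real.log ((t j : ℝ) * Real.log 2) := Real.log_le_log (Real.exp_pos _) hcast
      _ ≤ Real.log (Real.log (a (t j))) := Real.log_le_log h0 hlogaT
  obtain ⟨c1, c2, c3⟩ := hL₀ _ hLT
  exact stmt17_key ε hε a hmono (t j) (k j) (htk j) (hbig j) c1 c2 c3
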